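/- Let p be a prime and a a positive integer, and let A be the adjacency matrix of the modified divisor prime graph G*_Dp(p^a) (a matrix of size (a+1)×(a+1)). Then the characteristic polynomial of A satisfies det(x·I − A) = x^{a−1}·(x² − x − a). -/

import Mathlib

open Polynomial Matrix

lemma aux_charpoly (n : ℕ) (hn : 0 < n) :
    (Matrix.of (fun i j : Fin (n+1) => if i = 0 ∨ j = 0 then (1:ℝ) else 0)).charpoly
      = X ^ (n-1) * (X^2 - X - C (n:ℝ)) := by
  obtain ⟨m, rfl⟩ : ∃ m, n = m + 1 := ⟨n - 1, (Nat.succ_pred_eq_of_pos hn).symm⟩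
  set M : Matrix (Fin (m+2)) (Fin (m+2)) ℝ :=
    Matrix.of (fun i j : Fin (m+2) => if i = 0 ∨ j = 0 then (1:ℝ) else 0) with hM
  set K := FractionRing (Polynomial ℝ)
  let f : ℝ[X] →+* K := algebraMap ℝ[X] K
  have hf : Function.Injective f := IsFractionRing.injective _ _
  set t : K := f X with ht'
  have ht : t ≠ 0 := by
    intro h
    exact Polynomial.X_ne_zero (hf (by rw [show f 0 = 0 from map_zero f]; exact h))
  apply hf
  rw [Matrix.charpoly, RingHom.map_det]
  set u : Matrix (Fin (m+2)) (Fin 2) K := Matrix.of (fun i k =>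
    if k = 0 then (if i = 0 then -t⁻¹ else 0) else (if i = 0 then 0 else -t⁻¹)) with hu
  set v : Matrix (Fin 2) (Fin (m+2)) K := Matrix.of (fun k j =>
    if k = 0 then 1 else (if j = 0 then 1 else 0)) with hv
  have hfact : (charmatrix M).map f = t • (1 + u * v) := by
    ext i j
    rcases eq_or_ne i j with rfl | hij
    · rw [Matrix.map_apply, charmatrix_apply_eq]
      simp only [Matrix.smul_apply, Matrix.add_apply, Matrix.one_apply_eq,
        Matrix.mul_apply, Fin.sum_univ_two, hu, hv, Matrix.of_apply, hM, map_sub]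
      by_cases hi : i = 0 <;> simp [hi, smul_eq_mul, ← ht'] <;> linear_combination mul_inv_cancel₀ ht
    · rw [Matrix.map_apply, charmatrix_apply_ne _ _ _ hij]
      simp only [Matrix.smul_apply, Matrix.add_apply,
        Matrix.one_apply_ne hij, Matrix.mul_apply, Fin.sum_univ_two, hu, hv, Matrix.of_apply,
        hM, map_neg]
      by_cases hi : i = 0 <;> by_cases hj : j = 0 <;>
        simp [hi, hj, smul_eq_mul, ← ht'] <;> linear_combination mul_inv_cancel₀ ht
  rw [RingHom.mapMatrix_apply, hfact, Matrix.det_smul, Matrix.det_one_add_mul_comm,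
    Matrix.det_fin_two]
  have hvu00 : (v * u) 0 0 = ∑ k : Fin (m+2), (if k = 0 then -t⁻¹ else (0:K)) := by
    rw [Matrix.mul_apply]
    refine Finset.sum_congr rfl fun k _ => ?_
    by_cases hk : k = 0 <;> simp [hu, hv, hk]
  have hvu01 : (v * u) 0 1 = ∑ k : Fin (m+2), (if k = 0 then (0:K) else -t⁻¹) := by
    rw [Matrix.mul_apply]
    refine Finset.sum_congr rfl fun k _ => ?_
    by_cases hk : k = 0 <;> simp [hu, hv, hk]
  have hvu10 : (v * u) 1 0 = ∑ k : Fin (m+2), (if k = 0 then -t⁻¹ else (0:K)) := by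
    rw [Matrix.mul_apply]
    refine Finset.sum_congr rfl fun k _ => ?_
    by_cases hk : k = 0 <;> simp [hu, hv, hk]
  have hvu11 : (v * u) 1 1 = 0 := by
    rw [Matrix.mul_apply]
    rw [show (0:K) = ∑ k : Fin (m+2), (0:K) by simp]
    refine Finset.sum_congr rfl fun k _ => ?_
    by_cases hk : k = 0 <;> simp [hu, hv, hk]
  have S0 : ∑ k : Fin (m+2), (if k = 0 then -t⁻¹ else (0:K)) = -t⁻¹ := by
    simp [Finset.sum_ite_eq']
  have S1 : ∑ k : Fin (m+2), (if k = 0 then (0:K) else -t⁻¹) = -((m+1 : ℕ) : K) * t⁻¹ := by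
    have h1 : ∀ k : Fin (m+2), (if k = 0 then (0:K) else -t⁻¹)
        = -t⁻¹ - (if k = 0 then -t⁻¹ else 0) := by
      intro k; split <;> ring
    rw [Finset.sum_congr rfl fun k _ => h1 k, Finset.sum_sub_distrib, Finset.sum_const,
      Finset.sum_ite_eq' Finset.univ (0 : Fin (m+2))]
    simp [Finset.card_univ]
    push_cast
    ring
  simp only [Matrix.add_apply, hvu00, hvu01, hvu10, hvu11, S0, S1, Matrix.one_apply_eq,
    Matrix.one_apply_ne (show (0 : Fin 2) ≠ 1 by decide),
    Matrix.one_apply_ne (show (1 : Fin 2) ≠ 0 by decide)]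
  simp only [_root_.map_mul, map_pow, map_sub, Polynomial.C_eq_natCast, map_natCast, ← ht']
  rw [Fintype.card_fin, Nat.add_sub_cancel]
  push_cast
  linear_combination t ^ m * (-t - ((m : K) + 1) * (t * t⁻¹ + 1)) * mul_inv_cancel₀ ht

/-- The characteristic polynomial of the adjacency matrix `A` of the modified divisor
prime graph of `p ^ a` satisfies `det (X • I - A) = X ^ (a-1) * (X ^ 2 - X - a)`. -/
theorem charpoly_modifiedDivisorPrimeGraph_primePow (p a : ℕ) (hp : p.Prime) (ha : 0 < a)
    (A : Matrix {d : ℕ // d ∈ (p ^ a).divisors} {d : ℕ // d ∈ (p ^ a).divisors} ℝ)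
    (hA : ∀ u v : {d : ℕ // d ∈ (p ^ a).divisors},
      A u v = if Nat.gcd u.1 v.1 = 1 then 1 else 0) :
    A.charpoly = X ^ (a - 1) * (X ^ 2 - X - C (a : ℝ)) := by
  have hpow : ∀ i : Fin (a+1), p ^ (i : ℕ) ∈ (p ^ a).divisors := by
    intro i
    rw [Nat.mem_divisors]
    exact ⟨pow_dvd_pow p (Nat.lt_succ_iff.mp i.2), pow_ne_zero a hp.pos.ne'⟩
  let g : Fin (a+1) → {d : ℕ // d ∈ (p ^ a).divisors} := fun i => ⟨p ^ (i : ℕ), hpow i⟩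
  have hg : Function.Bijective g := by
    constructor
    · intro i j hij
      have := Nat.pow_right_injective hp.two_le (Subtype.mk_eq_mk.mp hij)
      exact Fin.ext this
    · rintro ⟨d, hd⟩
      obtain ⟨k, hk, rfl⟩ := (Nat.dvd_prime_pow hp).mp (Nat.mem_divisors.mp hd).1
      exact ⟨⟨k, Nat.lt_succ_of_le hk⟩, rfl⟩
  let e : Fin (a+1) ≃ {d : ℕ // d ∈ (p ^ a).divisors} := Equiv.ofBijective g hg
  have hsub : A.submatrix e e
      = Matrix.of (fun i j : Fin (a+1) => if i = 0 ∨ j = 0 then (1:ℝ) else 0) := by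
    ext i j
    rw [Matrix.submatrix_apply, hA]
    have : Nat.gcd ((e i : ℕ)) ((e j : ℕ)) = 1 ↔ (i = 0 ∨ j = 0) := by
      show Nat.gcd (p ^ (i:ℕ)) (p ^ (j:ℕ)) = 1 ↔ _
      constructor
      · intro h
        by_contra hc
        push_neg at hc
        obtain ⟨hi, hj⟩ := hc
        have hi' : 0 < (i : ℕ) := Nat.pos_of_ne_zero (fun h0 => hi (Fin.ext h0))
        have hj' : 0 < (j : ℕ) := Nat.pos_of_ne_zero (fun h0 => hj (Fin.ext h0))
        have hpd : p ∣ Nat.gcd (p ^ (i:ℕ)) (p ^ (j:ℕ)) :=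
          Nat.dvd_gcd (dvd_pow_self p hi'.ne') (dvd_pow_self p hj'.ne')
        rw [h] at hpd
        exact hp.one_lt.ne' (Nat.dvd_one.mp hpd)
      · rintro (rfl | rfl) <;> simp
    simp only [Matrix.of_apply]
    by_cases h : i = 0 ∨ j = 0
    · rw [if_pos h, if_pos (this.mpr h)]
    · rw [if_neg h, if_neg (fun hone => h (this.mp hone))]
  have hre : (Matrix.reindex e e (A.submatrix e e)) = A := by
    ext i j
    simp [Matrix.reindex_apply, Matrix.submatrix_apply]
  calc A.charpoly = (Matrix.reindex e e (A.submatrix e e)).charpoly := by rw [hre]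
    _ = (A.submatrix e e).charpoly := Matrix.charpoly_reindex e _
    _ = X ^ (a - 1) * (X ^ 2 - X - C (a : ℝ)) := by
        rw [hsub]
        exact aux_charpoly a ha
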